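/- Let ν ≥ 2, let μ satisfy 1 ≤ μ ≤ ν−1, and let Ψ be a nonempty finite set of coverings. Define the doped RVB polynomial F^h_Ψ = Σ_{ψ∈Ψ} Σ_{R ⊆ A, #R = μ} ∏_{a∈R}(X_{ψ(a)} − X_a) in ℂ[X_1,…,X_{2ν}]. Then F^h_Ψ ≠ 0 and F^h_Ψ splits across no nontrivial bipartition of Γ_{2ν}; i.e., the doped RVB state (the RVB state with γ = ν − μ holes) is genuinely multipartite entangled. -/

import Mathlib

open MvPolynomial Finset

noncomputable section

/-- The odd-labelled site `2t−1` of the paper (`t`-th site of sublattice `A`),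
zero-indexed as `2t` in `Fin (2ν)`. -/
def siteA (ν : ℕ) (t : Fin ν) : Fin (2 * ν) := ⟨2 * t.val, by have := t.isLt; omega⟩

/-- The even-labelled site `2t` of the paper (`t`-th site of sublattice `B`),
zero-indexed as `2t+1` in `Fin (2ν)`. -/
def siteB (ν : ℕ) (t : Fin ν) : Fin (2 * ν) := ⟨2 * t.val + 1, by have := t.isLt; omega⟩

/-- A covering is a bijection `ψ : A → B`; it is encoded by the permutation
`σ` of `Fin ν` with `ψ(siteA t) = siteB (σ t)`.  Its covering polynomial is
`F_ψ = ∏_{a∈A} (X_{ψ(a)} − X_a)`. -/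
def covPoly (ν : ℕ) (σ : Equiv.Perm (Fin ν)) : MvPolynomial (Fin (2 * ν)) ℂ :=
  ∏ t : Fin ν, (X (siteB ν (σ t)) - X (siteA ν t))

/-- `F` splits across the bipartition `(E, Eᶜ)`. -/
def SplitsAcross {n : ℕ} (F : MvPolynomial (Fin n) ℂ) (E : Finset (Fin n)) : Prop :=
  ∃ p q : MvPolynomial (Fin n) ℂ, F = p * q ∧ p.vars ⊆ E ∧ q.vars ⊆ Eᶜ

/-- `ψ(E ∩ A) = E ∩ B` for the covering `ψ` encoded by `σ`
(here `E ∩ B` is the set of odd-indexed, i.e. `B`-sublattice, elements of `E`). -/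
def MapsCut (ν : ℕ) (σ : Equiv.Perm (Fin ν)) (E : Finset (Fin (2 * ν))) : Prop :=
  ((Finset.univ.filter (fun t => siteA ν t ∈ E)).image fun t => siteB ν (σ t))
    = E.filter (fun x => x.val % 2 = 1)


/-- The (unnormalized) doped RVB polynomial with `μ` resonants (i.e. `γ = ν − μ`
holes): `F^h_Ψ = Σ_{ψ∈Ψ} Σ_{R ⊆ A, #R = μ} ∏_{a∈R} (X_{ψ(a)} − X_a)`. -/
def dopedPoly (ν μ : ℕ) (Ψ : Finset (Equiv.Perm (Fin ν))) :
    MvPolynomial (Fin (2 * ν)) ℂ :=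
  ∑ σ ∈ Ψ, ∑ R ∈ Finset.powersetCard μ (Finset.univ : Finset (Fin ν)),
    ∏ t ∈ R, (X (siteB ν (σ t)) - X (siteA ν t))

section helpers

variable {ν : ℕ}

lemma siteA_inj : Function.Injective (siteA ν) := by
  intro a b h
  have : (2:ℕ) * a.val = 2 * b.val := congrArg Fin.val h
  exact Fin.ext (by omega)

lemma siteB_inj : Function.Injective (siteB ν) := by
  intro a b h
  have : (2:ℕ) * a.val + 1 = 2 * b.val + 1 := congrArg Fin.val h
  exact Fin.ext (by omega)

lemma siteA_ne_siteB (s t : Fin ν) : siteA ν s ≠ siteB ν t := by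
  intro h
  have : (2:ℕ) * s.val = 2 * t.val + 1 := congrArg Fin.val h
  omega

/-- exponent vector of the squarefree monomial `∏_{t∈S} X_{f t}` -/
def expOf (f : Fin ν → Fin (2 * ν)) (S : Finset (Fin ν)) : Fin (2 * ν) →₀ ℕ :=
  ∑ t ∈ S, Finsupp.single (f t) 1

lemma expOf_apply {f : Fin ν → Fin (2 * ν)} (hf : Function.Injective f)
    (S : Finset (Fin ν)) (s : Fin ν) :
    expOf f S (f s) = if s ∈ S then 1 else 0 := by
  rw [expOf, Finset.sum_apply']
  rw [Finset.sum_congr rfl (fun t _ => Finsupp.single_apply)]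
  simp only [hf.eq_iff]
  rw [Finset.sum_ite_eq' S s (fun _ => 1)]

lemma expOf_apply_ne {f : Fin ν → Fin (2 * ν)} {S : Finset (Fin ν)} {x : Fin (2 * ν)}
    (h : ∀ t ∈ S, f t ≠ x) : expOf f S x = 0 := by
  rw [expOf, Finset.sum_apply']
  exact Finset.sum_eq_zero (fun t ht => Finsupp.single_eq_of_ne' (h t ht))

lemma sum_expOf (f : Fin ν → Fin (2 * ν)) (S : Finset (Fin ν)) (U : Finset (Fin (2 * ν))) :
    ∑ x ∈ U, expOf f S x = (S.filter (fun t => f t ∈ U)).card := by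
  calc ∑ x ∈ U, expOf f S x
      = ∑ x ∈ U, ∑ t ∈ S, (Finsupp.single (f t) 1 : Fin (2*ν) →₀ ℕ) x := by
        simp only [expOf, Finset.sum_apply']
    _ = ∑ t ∈ S, ∑ x ∈ U, (Finsupp.single (f t) 1 : Fin (2*ν) →₀ ℕ) x := Finset.sum_comm
    _ = ∑ t ∈ S, if f t ∈ U then 1 else 0 := by
        refine Finset.sum_congr rfl (fun t _ => ?_)
        rw [Finset.sum_congr rfl (fun x _ => (Finsupp.single_apply :
          (Finsupp.single (f t) 1 : Fin (2*ν) →₀ ℕ) x = _))]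
        exact Finset.sum_ite_eq U (f t) (fun _ => 1)
    _ = (S.filter (fun t => f t ∈ U)).card := (Finset.card_filter _ _).symm

lemma prod_X_eq_monomial (f : Fin ν → Fin (2 * ν)) (S : Finset (Fin ν)) :
    (∏ t ∈ S, (X (f t) : MvPolynomial (Fin (2 * ν)) ℂ)) = monomial (expOf f S) 1 := by
  classical
  induction S using Finset.induction_on with
  | empty => simp [expOf]
  | insert _ _ h ih =>
    rename_i a s
    rw [Finset.prod_insert h, ih, X, monomial_mul, one_mul]
    simp only [expOf, Finset.sum_insert h]

end helpers

section coeffs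

variable {ν : ℕ}

lemma term_eq (σ : Equiv.Perm (Fin ν)) (R : Finset (Fin ν)) :
    (∏ t ∈ R, (X (siteB ν (σ t)) - X (siteA ν t)) : MvPolynomial (Fin (2 * ν)) ℂ)
      = ∑ K ∈ R.powerset,
          monomial (expOf (fun t => siteB ν (σ t)) K + expOf (siteA ν) (R \ K))
            ((-1 : ℂ) ^ (R \ K).card) := by
  simp only [sub_eq_add_neg]
  rw [Finset.prod_add]
  refine Finset.sum_congr rfl (fun K _ => ?_)
  have h1 : (∏ t ∈ R \ K, (-X (siteA ν t)) : MvPolynomial (Fin (2 * ν)) ℂ)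
      = (-1) ^ (R \ K).card * ∏ t ∈ R \ K, X (siteA ν t) := by
    rw [← Finset.prod_const, ← Finset.prod_mul_distrib]
    simp
  rw [h1, prod_X_eq_monomial, prod_X_eq_monomial]
  have h2 : ((-1 : MvPolynomial (Fin (2 * ν)) ℂ) ^ (R \ K).card)
      = C ((-1 : ℂ) ^ (R \ K).card) := by simp
  rw [mul_comm ((-1 : MvPolynomial (Fin (2 * ν)) ℂ) ^ (R \ K).card) _, ← mul_assoc,
    monomial_mul, mul_one, h2, mul_comm _ (C _), C_mul_monomial, mul_one]

lemma coeff_term (σ : Equiv.Perm (Fin ν)) (R : Finset (Fin ν)) (γ : Fin (2 * ν) →₀ ℕ) :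
    coeff γ (∏ t ∈ R, (X (siteB ν (σ t)) - X (siteA ν t)) : MvPolynomial (Fin (2 * ν)) ℂ)
      = ∑ K ∈ R.powerset,
          if expOf (fun t => siteB ν (σ t)) K + expOf (siteA ν) (R \ K) = γ
          then (-1 : ℂ) ^ (R \ K).card else 0 := by
  rw [term_eq, MvPolynomial.coeff_sum]
  exact Finset.sum_congr rfl (fun K _ => coeff_monomial _ _ _)

end coeffs

section conds

variable {ν : ℕ}

lemma siteBσ_inj (σ : Equiv.Perm (Fin ν)) :
    Function.Injective (fun t => siteB ν (σ t)) :=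
  siteB_inj.comp σ.injective

lemma expOf_empty (f : Fin ν → Fin (2 * ν)) : expOf f ∅ = 0 := by simp [expOf]

lemma expOf_inj {f : Fin ν → Fin (2 * ν)} (hf : Function.Injective f)
    {R T : Finset (Fin ν)} (h : expOf f R = expOf f T) : R = T := by
  ext s
  have := congrFun (congrArg (↑·) h) (f s)
  simp only [expOf_apply hf] at this
  by_cases hR : s ∈ R <;> by_cases hT : s ∈ T <;> simp_all

lemma cond_allA_iff (σ : Equiv.Perm (Fin ν)) {R K T : Finset (Fin ν)} (hKR : K ⊆ R) :
    expOf (fun t => siteB ν (σ t)) K + expOf (siteA ν) (R \ K) = expOf (siteA ν) T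
      ↔ (K = ∅ ∧ R = T) := by
  constructor
  · intro h
    have hK : K = ∅ := by
      by_contra hne
      obtain ⟨t, ht⟩ := Finset.nonempty_iff_ne_empty.2 hne
      have := congrFun (congrArg (↑·) h) (siteB ν (σ t))
      simp only [Finsupp.coe_add, Pi.add_apply] at this
      rw [expOf_apply (siteBσ_inj σ) K t,
        expOf_apply_ne (fun s _ => siteA_ne_siteB s (σ t)),
        expOf_apply_ne (fun s _ => siteA_ne_siteB s (σ t)), if_pos ht] at this
      simp at this
    subst hK
    rw [expOf_empty, zero_add, Finset.sdiff_empty] at h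
    exact ⟨rfl, expOf_inj siteA_inj h⟩
  · rintro ⟨rfl, rfl⟩
    rw [expOf_empty, zero_add, Finset.sdiff_empty]

lemma cond_mixed_iff (σ : Equiv.Perm (Fin ν)) {R K S : Finset (Fin ν)} (j : Fin ν)
    (hKR : K ⊆ R) :
    expOf (fun t => siteB ν (σ t)) K + expOf (siteA ν) (R \ K)
        = Finsupp.single (siteB ν j) 1 + expOf (siteA ν) S
      ↔ (K = {σ⁻¹ j} ∧ R \ K = S) := by
  have hsingle : (Finsupp.single (siteB ν j) 1 : Fin (2 * ν) →₀ ℕ)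
      = expOf (fun t => siteB ν (σ t)) {σ⁻¹ j} := by
    rw [expOf, Finset.sum_singleton, Equiv.Perm.inv_def, Equiv.apply_symm_apply]
  constructor
  · intro h
    have hK : K = {σ⁻¹ j} := by
      ext t
      have := congrFun (congrArg (↑·) h) (siteB ν (σ t))
      simp only [Finsupp.coe_add, Pi.add_apply, hsingle] at this
      rw [expOf_apply (siteBσ_inj σ) K t, expOf_apply (siteBσ_inj σ) {σ⁻¹ j} t,
        expOf_apply_ne (fun s _ => siteA_ne_siteB s (σ t)),
        expOf_apply_ne (fun s _ => siteA_ne_siteB s (σ t))] at this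
      simp only [add_zero, Finset.mem_singleton] at this ⊢
      by_cases h1 : t ∈ K <;> by_cases h2 : t = σ⁻¹ j <;> simp_all
    refine ⟨hK, ?_⟩
    ext s
    have := congrFun (congrArg (↑·) h) (siteA ν s)
    simp only [Finsupp.coe_add, Pi.add_apply] at this
    rw [expOf_apply siteA_inj (R \ K) s, expOf_apply siteA_inj S s,
      expOf_apply_ne (f := fun t => siteB ν (σ t))
        (fun u _ => fun he => siteA_ne_siteB s (σ u) he.symm),
      Finsupp.single_eq_of_ne' (fun he => siteA_ne_siteB s j he.symm)] at this
    by_cases h1 : s ∈ R \ K <;> by_cases h2 : s ∈ S <;> simp_all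
  · rintro ⟨rfl, rfl⟩
    rw [hsingle]

end conds

section L12

variable {ν : ℕ}

lemma coeff_doped_allA (μ : ℕ) (Ψ : Finset (Equiv.Perm (Fin ν)))
    (T : Finset (Fin ν)) (hT : T.card = μ) :
    coeff (expOf (siteA ν) T) (dopedPoly ν μ Ψ) = (Ψ.card : ℂ) * (-1) ^ μ := by
  unfold dopedPoly
  rw [MvPolynomial.coeff_sum]
  have key : ∀ σ ∈ Ψ, coeff (expOf (siteA ν) T)
      (∑ R ∈ Finset.powersetCard μ (Finset.univ : Finset (Fin ν)),
        ∏ t ∈ R, (X (siteB ν (σ t)) - X (siteA ν t)) : MvPolynomial (Fin (2 * ν)) ℂ)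
      = (-1) ^ μ := by
    intro σ _
    rw [MvPolynomial.coeff_sum]
    have inner : ∀ R ∈ Finset.powersetCard μ (Finset.univ : Finset (Fin ν)),
        coeff (expOf (siteA ν) T)
          (∏ t ∈ R, (X (siteB ν (σ t)) - X (siteA ν t)) : MvPolynomial (Fin (2 * ν)) ℂ)
        = if R = T then (-1 : ℂ) ^ μ else 0 := by
      intro R hR
      rw [coeff_term]
      by_cases hRT : R = T
      · subst hRT
        rw [if_pos rfl]
        rw [Finset.sum_eq_single ∅]
        · rw [if_pos ((cond_allA_iff σ (Finset.empty_subset R)).2 ⟨rfl, rfl⟩),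
            Finset.sdiff_empty, hT]
        · intro K hK hKne
          rw [if_neg]
          intro hc
          exact hKne ((cond_allA_iff σ (Finset.mem_powerset.1 hK)).1 hc).1
        · intro h
          exact absurd (Finset.empty_mem_powerset R) h
      · rw [if_neg hRT]
        refine Finset.sum_eq_zero (fun K hK => ?_)
        rw [if_neg]
        intro hc
        exact hRT ((cond_allA_iff σ (Finset.mem_powerset.1 hK)).1 hc).2
    rw [Finset.sum_congr rfl inner]
    rw [Finset.sum_ite_eq' (Finset.powersetCard μ (Finset.univ : Finset (Fin ν))) T
      (fun _ => (-1 : ℂ) ^ μ)]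
    rw [if_pos (Finset.mem_powersetCard.2 ⟨Finset.subset_univ T, hT⟩)]
  rw [Finset.sum_congr rfl key, Finset.sum_const, nsmul_eq_mul]

lemma coeff_doped_mixed (μ : ℕ) (hμ : 1 ≤ μ) (Ψ : Finset (Equiv.Perm (Fin ν)))
    (S : Finset (Fin ν)) (hS : S.card = μ - 1) (j : Fin ν) :
    coeff (Finsupp.single (siteB ν j) 1 + expOf (siteA ν) S) (dopedPoly ν μ Ψ)
      = ((Ψ.filter (fun σ => σ⁻¹ j ∉ S)).card : ℂ) * (-1) ^ (μ - 1) := by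
  unfold dopedPoly
  rw [MvPolynomial.coeff_sum]
  have key : ∀ σ ∈ Ψ, coeff (Finsupp.single (siteB ν j) 1 + expOf (siteA ν) S)
      (∑ R ∈ Finset.powersetCard μ (Finset.univ : Finset (Fin ν)),
        ∏ t ∈ R, (X (siteB ν (σ t)) - X (siteA ν t)) : MvPolynomial (Fin (2 * ν)) ℂ)
      = if σ⁻¹ j ∉ S then (-1 : ℂ) ^ (μ - 1) else 0 := by
    intro σ _
    rw [MvPolynomial.coeff_sum]
    simp only [coeff_term]
    by_cases hj : σ⁻¹ j ∈ S
    · rw [if_neg (by simpa using hj)]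
      refine Finset.sum_eq_zero (fun R hR => Finset.sum_eq_zero (fun K hK => ?_))
      rw [if_neg]
      intro hc
      obtain ⟨hK1, hK2⟩ := (cond_mixed_iff σ j (Finset.mem_powerset.1 hK)).1 hc
      subst hK1
      rw [← hK2] at hj
      exact (Finset.mem_sdiff.1 hj).2 (Finset.mem_singleton_self _)
    · rw [if_pos hj]
      rw [Finset.sum_eq_single (insert (σ⁻¹ j) S)]
      · rw [Finset.sum_eq_single ({σ⁻¹ j} : Finset (Fin ν))]
        · have hsd : insert (σ⁻¹ j) S \ {σ⁻¹ j} = S := by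
            rw [Finset.insert_sdiff_of_mem _ (Finset.mem_singleton_self _),
              Finset.sdiff_singleton_eq_erase, Finset.erase_eq_of_notMem hj]
          rw [if_pos ((cond_mixed_iff σ j (by simp)).2 ⟨rfl, hsd⟩), hsd, hS]
        · intro K hK hKne
          rw [if_neg]
          intro hc
          exact hKne ((cond_mixed_iff σ j (Finset.mem_powerset.1 hK)).1 hc).1
        · intro h
          exact absurd (Finset.mem_powerset.2 (by simp)) h
      · intro R hR hRne
        refine Finset.sum_eq_zero (fun K hK => ?_)
        rw [if_neg]
        intro hc
        obtain ⟨hK1, hK2⟩ := (cond_mixed_iff σ j (Finset.mem_powerset.1 hK)).1 hc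
        apply hRne
        have hKsub := Finset.mem_powerset.1 hK
        have : R = R \ K ∪ K := (Finset.sdiff_union_of_subset hKsub).symm
        rw [this, hK2, hK1]
        rw [Finset.union_comm]
        rfl
      · intro h
        refine absurd (Finset.mem_powersetCard.2 ⟨Finset.subset_univ _, ?_⟩) h
        rw [Finset.card_insert_of_notMem hj, hS]
        omega
  rw [Finset.sum_congr rfl key, Finset.sum_ite, Finset.sum_const, Finset.sum_const]
  simp [nsmul_eq_mul]

lemma dopedPoly_homogeneous (μ : ℕ) (Ψ : Finset (Equiv.Perm (Fin ν))) :
    (dopedPoly ν μ Ψ).IsHomogeneous μ := by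
  refine MvPolynomial.IsHomogeneous.sum _ _ _ (fun σ _ => ?_)
  refine MvPolynomial.IsHomogeneous.sum _ _ _ (fun R hR => ?_)
  have := MvPolynomial.IsHomogeneous.prod R
    (fun t => (X (siteB ν (σ t)) - X (siteA ν t) : MvPolynomial (Fin (2 * ν)) ℂ))
    (fun _ => 1)
    (fun t _ => ((isHomogeneous_X ℂ _).sub (isHomogeneous_X ℂ _)))
  rw [Finset.sum_const, smul_eq_mul, mul_one, (Finset.mem_powersetCard.1 hR).2] at this
  exact this

end L12

section split

variable {n : ℕ}

lemma splits_compl {F : MvPolynomial (Fin n) ℂ} {E : Finset (Fin n)}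
    (h : SplitsAcross F E) : SplitsAcross F Eᶜ := by
  obtain ⟨p, q, hF, hp, hq⟩ := h
  exact ⟨q, p, by rw [hF, mul_comm], hq, by simpa using hp⟩

open Classical in
lemma coeff_split {p q : MvPolynomial (Fin n) ℂ} {E : Finset (Fin n)}
    (hp : p.vars ⊆ E) (hq : q.vars ⊆ Eᶜ) (γ : Fin n →₀ ℕ) :
    coeff γ (p * q) = coeff (γ.filter (· ∈ E)) p * coeff (γ.filter (· ∉ E)) q := by
  rw [MvPolynomial.coeff_mul]
  have hmem : (γ.filter (· ∈ E), γ.filter (· ∉ E)) ∈ Finset.HasAntidiagonal.antidiagonal γ := by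
    rw [Finset.HasAntidiagonal.mem_antidiagonal]
    ext x
    simp only [Finsupp.add_apply, Finsupp.filter_apply]
    by_cases hx : x ∈ E <;> simp [hx]
  rw [Finset.sum_eq_single (γ.filter (· ∈ E), γ.filter (· ∉ E))]
  · intro ab hab habne
    by_contra h0
    have hpa : coeff ab.1 p ≠ 0 := fun h => h0 (by rw [h, zero_mul])
    have hqb : coeff ab.2 q ≠ 0 := fun h => h0 (by rw [h, mul_zero])
    have hsa : ∀ x ∈ ab.1.support, x ∈ E := by
      intro x hx
      exact hp ((MvPolynomial.mem_vars x).2 ⟨ab.1, MvPolynomial.mem_support_iff.2 hpa, hx⟩)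
    have hsb : ∀ x ∈ ab.2.support, x ∉ E := by
      intro x hx
      exact Finset.mem_compl.1
        (hq ((MvPolynomial.mem_vars x).2 ⟨ab.2, MvPolynomial.mem_support_iff.2 hqb, hx⟩))
    have hsum : ab.1 + ab.2 = γ := Finset.HasAntidiagonal.mem_antidiagonal.1 hab
    apply habne
    have h1 : ab.1 = γ.filter (· ∈ E) := by
      ext x
      have hx := congrFun (congrArg (↑·) hsum) x
      simp only [Finsupp.coe_add, Pi.add_apply] at hx
      rw [Finsupp.filter_apply]
      by_cases hxE : x ∈ E
      · have : ab.2 x = 0 := by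
          by_contra hne
          exact hsb x (Finsupp.mem_support_iff.2 hne) hxE
        rw [if_pos hxE, ← hx, this, add_zero]
      · have : ab.1 x = 0 := by
          by_contra hne
          exact hxE (hsa x (Finsupp.mem_support_iff.2 hne))
        rw [if_neg hxE, this]
    have h2 : ab.2 = γ.filter (· ∉ E) := by
      have := Finset.HasAntidiagonal.mem_antidiagonal.1 hmem
      have h3 : ab.1 + ab.2 = γ.filter (· ∈ E) + γ.filter (· ∉ E) := by rw [hsum, this]
      rw [h1] at h3
      exact add_left_cancel h3
    exact Prod.ext h1 h2
  · intro h
    exact absurd hmem h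

open Classical in
lemma no_split_helper {μ : ℕ} {F : MvPolynomial (Fin n) ℂ} (hF : F.IsHomogeneous μ)
    {E : Finset (Fin n)} (hsp : SplitsAcross F E)
    (γ1 γ2 : Fin n →₀ ℕ)
    (h1 : coeff γ1 F ≠ 0) (h2 : coeff γ2 F ≠ 0)
    (hd : ∑ x ∈ E, γ1 x ≠ ∑ x ∈ E, γ2 x) : False := by
  obtain ⟨p, q, rfl, hp, hq⟩ := hsp
  have degsum : ∀ γ : Fin n →₀ ℕ, γ.degree = ∑ x ∈ E, γ x + ∑ x ∈ Eᶜ, γ x := by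
    intro γ
    rw [Finset.sum_add_sum_compl]
    exact (Finset.sum_subset (Finset.subset_univ _)
      (fun x _ hx => Finsupp.notMem_support_iff.1 hx))
  have hdeg1 : γ1.degree = μ := by
    by_contra h
    exact h1 (hF.coeff_eq_zero h)
  have hdeg2 : γ2.degree = μ := by
    by_contra h
    exact h2 (hF.coeff_eq_zero h)
  -- the two crossed exponents
  set a1 := γ1.filter (· ∈ E) with ha1
  set b1 := γ1.filter (· ∉ E) with hb1
  set a2 := γ2.filter (· ∈ E) with ha2
  set b2 := γ2.filter (· ∉ E) with hb2
  have hfE : ∀ γ1' γ2' : Fin n →₀ ℕ,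
      (γ1'.filter (· ∈ E) + γ2'.filter (· ∉ E)).filter (· ∈ E) = γ1'.filter (· ∈ E) := by
    intro γ1' γ2'
    ext x
    rw [Finsupp.filter_apply]
    by_cases hx : x ∈ E
    · simp [Finsupp.filter_apply, hx]
    · simp [Finsupp.filter_apply, hx]
  have hfnE : ∀ γ1' γ2' : Fin n →₀ ℕ,
      (γ1'.filter (· ∈ E) + γ2'.filter (· ∉ E)).filter (· ∉ E) = γ2'.filter (· ∉ E) := by
    intro γ1' γ2'
    ext x
    rw [Finsupp.filter_apply]
    by_cases hx : x ∈ E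
    · simp [Finsupp.filter_apply, hx]
    · simp [Finsupp.filter_apply, hx]
  have degcross : ∀ γ1' γ2' : Fin n →₀ ℕ,
      (γ1'.filter (· ∈ E) + γ2'.filter (· ∉ E)).degree
        = ∑ x ∈ E, γ1' x + ∑ x ∈ Eᶜ, γ2' x := by
    intro γ1' γ2'
    rw [degsum]
    congr 1
    · refine Finset.sum_congr rfl (fun x hx => ?_)
      simp [Finsupp.filter_apply, hx]
    · refine Finset.sum_congr rfl (fun x hx => ?_)
      have hx' : x ∉ E := Finset.mem_compl.1 hx
      simp [Finsupp.filter_apply, hx']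
  -- coefficients of crossed exponents vanish
  have hc12 : coeff (a1 + b2) (p * q) = 0 := by
    apply hF.coeff_eq_zero
    rw [ha1, hb2, degcross]
    have e1 := degsum γ1; have e2 := degsum γ2
    omega
  have hc21 : coeff (a2 + b1) (p * q) = 0 := by
    apply hF.coeff_eq_zero
    rw [ha2, hb1, degcross]
    have e1 := degsum γ1; have e2 := degsum γ2
    omega
  have key12 : coeff (a1 + b2) (p * q) = coeff a1 p * coeff b2 q := by
    rw [coeff_split hp hq, ha1, hb2, hfE, hfnE]
  have key21 : coeff (a2 + b1) (p * q) = coeff a2 p * coeff b1 q := by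
    rw [coeff_split hp hq, ha2, hb1, hfE, hfnE]
  have k1 : coeff γ1 (p * q) = coeff a1 p * coeff b1 q := coeff_split hp hq γ1
  have k2 : coeff γ2 (p * q) = coeff a2 p * coeff b2 q := coeff_split hp hq γ2
  have : coeff γ1 (p * q) * coeff γ2 (p * q) = 0 := by
    rw [k1, k2]
    calc coeff a1 p * coeff b1 q * (coeff a2 p * coeff b2 q)
        = (coeff a1 p * coeff b2 q) * (coeff a2 p * coeff b1 q) := by ring
      _ = 0 := by rw [← key12, ← key21, hc12, hc21, mul_zero]
  exact (mul_ne_zero h1 h2) this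

end split

section cases

variable {ν μ : ℕ}

lemma coeff_allA_ne_zero (μ : ℕ) {Ψ : Finset (Equiv.Perm (Fin ν))} (hΨ : Ψ.Nonempty)
    (T : Finset (Fin ν)) (hT : T.card = μ) :
    coeff (expOf (siteA ν) T) (dopedPoly ν μ Ψ) ≠ 0 := by
  rw [coeff_doped_allA μ Ψ T hT]
  exact mul_ne_zero (Nat.cast_ne_zero.2 (Finset.card_ne_zero.2 hΨ))
    (pow_ne_zero _ (neg_ne_zero.2 one_ne_zero))

lemma no_split_case1 (hν : 2 ≤ ν) (hμ : 1 ≤ μ) (hμ' : μ ≤ ν - 1)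
    {Ψ : Finset (Equiv.Perm (Fin ν))} (hΨ : Ψ.Nonempty) {E : Finset (Fin (2 * ν))}
    {t1 t2 : Fin ν} (h1 : siteA ν t1 ∈ E) (h2 : siteA ν t2 ∉ E) :
    ¬ SplitsAcross (dopedPoly ν μ Ψ) E := by
  intro hsp
  have ht12 : t1 ≠ t2 := fun h => h2 (h ▸ h1)
  obtain ⟨S, hSsub, hScard⟩ := Finset.exists_subset_card_eq
    (s := (Finset.univ : Finset (Fin ν)) \ {t1, t2}) (n := μ - 1)
    (by
      rw [Finset.card_sdiff_of_subset (Finset.subset_univ _), Finset.card_univ, Fintype.card_fin,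
        Finset.card_pair ht12]
      omega)
  have hT1 : t1 ∉ S := fun h => by have := hSsub h; simp at this
  have hT2 : t2 ∉ S := fun h => by have := hSsub h; simp at this
  have hcard1 : (insert t1 S).card = μ := by
    rw [Finset.card_insert_of_notMem hT1, hScard]; omega
  have hcard2 : (insert t2 S).card = μ := by
    rw [Finset.card_insert_of_notMem hT2, hScard]; omega
  apply no_split_helper (dopedPoly_homogeneous μ Ψ) hsp
    (expOf (siteA ν) (insert t1 S)) (expOf (siteA ν) (insert t2 S))
    (coeff_allA_ne_zero μ hΨ _ hcard1) (coeff_allA_ne_zero μ hΨ _ hcard2)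
  rw [sum_expOf, sum_expOf]
  rw [Finset.filter_insert, if_pos h1, Finset.filter_insert, if_neg h2]
  have hnm : t1 ∉ S.filter (fun t => siteA ν t ∈ E) :=
    fun h => hT1 (Finset.mem_of_mem_filter t1 h)
  rw [Finset.card_insert_of_notMem hnm]
  omega

lemma no_split_case2 (hν : 2 ≤ ν) (hμ : 1 ≤ μ) (hμ' : μ ≤ ν - 1)
    {Ψ : Finset (Equiv.Perm (Fin ν))} (hΨ : Ψ.Nonempty) {E : Finset (Fin (2 * ν))}
    (hA : ∀ t, siteA ν t ∈ E) {j : Fin ν} (hj : siteB ν j ∉ E) :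
    ¬ SplitsAcross (dopedPoly ν μ Ψ) E := by
  intro hsp
  obtain ⟨σ0, hσ0⟩ := hΨ
  obtain ⟨T, -, hTcard⟩ := Finset.exists_subset_card_eq (s := (Finset.univ : Finset (Fin ν))) (n := μ)
    (by rw [Finset.card_univ, Fintype.card_fin]; omega)
  obtain ⟨S, hSsub, hScard⟩ := Finset.exists_subset_card_eq
    (s := (Finset.univ : Finset (Fin ν)).erase (σ0⁻¹ j)) (n := μ - 1)
    (by
      rw [Finset.card_erase_of_mem (Finset.mem_univ _), Finset.card_univ, Fintype.card_fin]
      omega)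
  have hjS : σ0⁻¹ j ∉ S := fun h => (Finset.mem_erase.1 (hSsub h)).1 rfl
  have hc2 : coeff (Finsupp.single (siteB ν j) 1 + expOf (siteA ν) S)
      (dopedPoly ν μ Ψ) ≠ 0 := by
    rw [coeff_doped_mixed μ hμ Ψ S hScard j]
    refine mul_ne_zero (Nat.cast_ne_zero.2 (Finset.card_ne_zero.2 ⟨σ0, ?_⟩))
      (pow_ne_zero _ (neg_ne_zero.2 one_ne_zero))
    exact Finset.mem_filter.2 ⟨hσ0, hjS⟩
  apply no_split_helper (dopedPoly_homogeneous μ Ψ) hsp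
    (expOf (siteA ν) T) (Finsupp.single (siteB ν j) 1 + expOf (siteA ν) S)
    (coeff_allA_ne_zero μ ⟨σ0, hσ0⟩ T hTcard) hc2
  have hS1 : ∑ x ∈ E, expOf (siteA ν) T x = μ := by
    rw [sum_expOf, Finset.filter_true_of_mem (fun t _ => hA t), hTcard]
  have hS2 : ∑ x ∈ E,
      (Finsupp.single (siteB ν j) 1 + expOf (siteA ν) S : Fin (2 * ν) →₀ ℕ) x = μ - 1 := by
    have : ∀ x ∈ E, (Finsupp.single (siteB ν j) 1 + expOf (siteA ν) S : Fin (2 * ν) →₀ ℕ) x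
        = (Finsupp.single (siteB ν j) 1 : Fin (2 * ν) →₀ ℕ) x + expOf (siteA ν) S x :=
      fun x _ => rfl
    rw [Finset.sum_congr rfl this, Finset.sum_add_distrib]
    have e1 : ∑ x ∈ E, (Finsupp.single (siteB ν j) 1 : Fin (2 * ν) →₀ ℕ) x = 0 := by
      rw [Finset.sum_congr rfl (fun x _ => (Finsupp.single_apply :
          (Finsupp.single (siteB ν j) 1 : Fin (2 * ν) →₀ ℕ) x = _)),
        Finset.sum_ite_eq E (siteB ν j) (fun _ => 1), if_neg hj]
    rw [e1, sum_expOf, Finset.filter_true_of_mem (fun t _ => hA t), hScard, zero_add]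
  rw [hS1, hS2]
  omega

end cases


/-- Theorem 3.9 of Section 3.2: for `1 ≤ μ ≤ ν − 1` and `Ψ`
nonempty, the doped RVB polynomial is nonzero and splits across no nontrivial
bipartition: the doped RVB state is genuinely multipartite entangled. -/
theorem stmt_17 (ν μ : ℕ) (hν : 2 ≤ ν) (hμ : 1 ≤ μ) (hμ' : μ ≤ ν - 1)
    (Ψ : Finset (Equiv.Perm (Fin ν))) (hΨ : Ψ.Nonempty) :
    dopedPoly ν μ Ψ ≠ 0 ∧
    ∀ E : Finset (Fin (2 * ν)), E.Nonempty → E ≠ Finset.univ →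
      ¬ SplitsAcross (dopedPoly ν μ Ψ) E := by
  constructor
  · obtain ⟨T, -, hT⟩ := Finset.exists_subset_card_eq (s := (Finset.univ : Finset (Fin ν))) (n := μ)
      (by rw [Finset.card_univ, Fintype.card_fin]; omega)
    intro h
    exact coeff_allA_ne_zero μ hΨ T hT (by rw [h, MvPolynomial.coeff_zero])
  · intro E hE hEuniv hsp
    by_cases hA1 : ∀ t, siteA ν t ∈ E
    · have hex : ∃ x : Fin (2 * ν), x ∉ E := by
        by_contra h
        push_neg at h
        exact hEuniv (Finset.eq_univ_iff_forall.2 h)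
      obtain ⟨x, hx⟩ := hex
      have hlt := x.isLt
      by_cases hpar : x.val % 2 = 0
      · refine hx ?_
        have hxa : x = siteA ν ⟨x.val / 2, by omega⟩ := Fin.ext (by simp [siteA]; omega)
        rw [hxa]
        exact hA1 _
      · have hxb : x = siteB ν ⟨x.val / 2, by omega⟩ := Fin.ext (by simp [siteB]; omega)
        exact no_split_case2 hν hμ hμ' hΨ hA1 (j := ⟨x.val / 2, by omega⟩)
          (hxb ▸ hx) hsp
    · push_neg at hA1
      obtain ⟨t2, ht2⟩ := hA1
      by_cases hA2 : ∃ t1, siteA ν t1 ∈ E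
      · obtain ⟨t1, ht1⟩ := hA2
        exact no_split_case1 hν hμ hμ' hΨ ht1 ht2 hsp
      · push_neg at hA2
        obtain ⟨x, hx⟩ := hE
        have hlt := x.isLt
        have hpar : x.val % 2 = 1 := by
          by_contra h
          have hx0 : x.val % 2 = 0 := by omega
          have hxa : x = siteA ν ⟨x.val / 2, by omega⟩ := Fin.ext (by simp [siteA]; omega)
          exact hA2 _ (hxa ▸ hx)
        have hxb : x = siteB ν ⟨x.val / 2, by omega⟩ := Fin.ext (by simp [siteB]; omega)
        refine no_split_case2 hν hμ hμ' hΨ (E := Eᶜ)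
          (fun t => Finset.mem_compl.2 (hA2 t)) (j := ⟨x.val / 2, by omega⟩)
          ?_ (splits_compl hsp)
        rw [Finset.mem_compl, not_not, ← hxb]
        exact hx
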